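/- For every finite word w on {0,1} define |0,w⟩ := 2^{−1/2}(e_{0w} − e_{1w}) and, for n ≥ 1, |n,w⟩ := 2^{−(n+1)/2}( Σ_{u : ℓ(u)=n} e_{u0w} − Σ_{u : ℓ(u)=n} e_{u1w} ), where the sums run over all words u of length n. Then: (i) every |n,w⟩ (n ≥ 0) is a unit vector in L²(μ); (ii) K|n,w⟩ = |n+1,w⟩ for all n ≥ 0; (iii) L|n,w⟩ = |n−1,w⟩ for all n ≥ 1; (iv) L|0,w⟩ = 0; consequently (v) Kⁿ|0,w⟩ = |n,w⟩ and K L |n,w⟩ = |n,w⟩ for all n ≥ 1. -/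

import Mathlib

open MeasureTheory ContinuousLinearMap
open scoped RealInnerProductSpace InnerProductSpace ENNReal

noncomputable section

/-- The shift space `Ω = {0,1}^ℕ`, with `false` playing the role of the symbol `0`
and `true` of the symbol `1`. -/
abbrev Ω : Type := ℕ → Bool

/-- The shift map `σ`, `σ(x)ₙ = x_{n+1}`. -/
def shiftMap : Ω → Ω := fun x n => x (n + 1)

/-- Prepending a symbol: `consSeq a x = ax`. -/
def consSeq (a : Bool) (x : Ω) : Ω := fun n => Nat.casesOn n a (fun k => x k)

/-- The cylinder set `[w]` of sequences beginning with the finite word `w`. -/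
def cylinder (w : List Bool) : Set Ω := {x | ∀ i : Fin w.length, x (i : ℕ) = w.get i}

/-- The Hilbert space `L²(μ)` (real). -/
abbrev E (μ : Measure Ω) := Lp (α := Ω) ℝ 2 μ

/-- The Hilbert space `H = L²(μ) × L²(μ)` with the norm `√(‖φ‖² + ‖ψ‖²)`. -/
abbrev HS (μ : Measure Ω) := WithLp 2 (E μ × E μ)

variable {μ : Measure Ω}

/-- The diagonal block operator `(φ, ψ) ↦ (A₁φ, A₂ψ)` on `H`. -/
def blockDiag (A₁ A₂ : E μ →L[ℝ] E μ) : HS μ →L[ℝ] HS μ :=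
  ((WithLp.prodContinuousLinearEquiv 2 ℝ (E μ) (E μ)).symm.toContinuousLinearMap).comp
    (((A₁.comp (ContinuousLinearMap.fst ℝ (E μ) (E μ))).prod
        (A₂.comp (ContinuousLinearMap.snd ℝ (E μ) (E μ)))).comp
      (WithLp.prodContinuousLinearEquiv 2 ℝ (E μ) (E μ)).toContinuousLinearMap)

/-- The antidiagonal block operator `(φ, ψ) ↦ (A₁ψ, A₂φ)` on `H`. -/
def blockAntidiag (A₁ A₂ : E μ →L[ℝ] E μ) : HS μ →L[ℝ] HS μ :=
  ((WithLp.prodContinuousLinearEquiv 2 ℝ (E μ) (E μ)).symm.toContinuousLinearMap).comp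
    (((A₁.comp (ContinuousLinearMap.snd ℝ (E μ) (E μ))).prod
        (A₂.comp (ContinuousLinearMap.fst ℝ (E μ) (E μ)))).comp
      (WithLp.prodContinuousLinearEquiv 2 ℝ (E μ) (E μ)).toContinuousLinearMap)

/-- The diagonal representation `π(A)(φ,ψ) = (Aφ, Aψ)`. -/
def diagRep (A : E μ →L[ℝ] E μ) : HS μ →L[ℝ] HS μ := blockDiag A A

/-- The Dirac operator `D(φ,ψ) = (Kψ, Lφ)` associated with the pair `(K, L)`. -/
def dirac (K L : E μ →L[ℝ] E μ) : HS μ →L[ℝ] HS μ := blockAntidiag K L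

/-- The commutator `[D, π(A)]`. -/
def commD (K L A : E μ →L[ℝ] E μ) : HS μ →L[ℝ] HS μ :=
  (dirac K L).comp (diagRep A) - (diagRep A).comp (dirac K L)

/-- The rank-one orthogonal projection onto the span of the unit vector `ψ`:
`φ ↦ ⟪ψ, φ⟫ • ψ`. -/
def rankOneProj (ψ : E μ) : E μ →L[ℝ] E μ := (innerSL ℝ ψ).smulRight ψ

/-- The Haar-basis element `e_w = 2^{ℓ(w)/2} (χ_{[w1]} - χ_{[w0]})`, as a function on `Ω`. -/
def haarFun (w : List Bool) : Ω → ℝ := fun x =>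
  (2 : ℝ) ^ ((w.length : ℝ) / 2) *
    ((cylinder (w ++ [true])).indicator 1 x - (cylinder (w ++ [false])).indicator 1 x)

lemma continuous_shiftMap : Continuous shiftMap :=
  continuous_pi fun n => continuous_apply (n + 1)

lemma continuous_consSeq (a : Bool) : Continuous (consSeq a) := by
  apply continuous_pi
  intro n
  cases n with
  | zero => exact continuous_const
  | succ k => exact continuous_apply k

/-- The Koopman operator on continuous functions: `f ↦ f ∘ σ`. -/
def koopmanC (f : C(Ω, ℝ)) : C(Ω, ℝ) := f.comp ⟨shiftMap, continuous_shiftMap⟩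

/-- The Ruelle operator on continuous functions: `(Lf)(x) = (f(0x) + f(1x))/2`. -/
def ruelleC (f : C(Ω, ℝ)) : C(Ω, ℝ) :=
  ⟨fun x => (f (consSeq false x) + f (consSeq true x)) / 2,
    ((f.continuous.comp (continuous_consSeq false)).add
      (f.continuous.comp (continuous_consSeq true))).div_const 2⟩

end
section
variable {μ : Measure Ω}

/-- The vector `|n,w⟩ = 2^{−(n+1)/2}(Σ_{ℓ(u)=n} e_{u0w} − Σ_{ℓ(u)=n} e_{u1w})`
(for `n = 0` this is `2^{−1/2}(e_{0w} − e_{1w})`). -/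
noncomputable def ket (e : List Bool → E μ) (n : ℕ) (w : List Bool) : E μ :=
  (2 : ℝ) ^ (-((n : ℝ) + 1) / 2) •
    ((∑ u : Fin n → Bool, e (List.ofFn u ++ (false :: w))) -
      ∑ u : Fin n → Bool, e (List.ofFn u ++ (true :: w)))

end
section Cyl

lemma mem_cylinder_iff' (w : List Bool) (x : Ω) :
    x ∈ cylinder w ↔ ∀ i, (h : i < w.length) → x i = w.get ⟨i, h⟩ := by
  constructor
  · intro hx i h; exact hx ⟨i, h⟩
  · intro h i; exact h i i.isLt

lemma cylinder_nil : cylinder ([] : List Bool) = Set.univ := by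
  ext x; simp [_root_.cylinder]

lemma mem_cylinder_cons (a : Bool) (w : List Bool) (x : Ω) :
    x ∈ cylinder (a :: w) ↔ x 0 = a ∧ shiftMap x ∈ cylinder w := by
  constructor
  · intro h
    refine ⟨h ⟨0, Nat.succ_pos _⟩, fun i => ?_⟩
    exact h i.succ
  · rintro ⟨h0, h⟩ i
    match i with
    | ⟨0, _⟩ => exact h0
    | ⟨k+1, hk⟩ => exact h ⟨k, Nat.lt_of_succ_lt_succ hk⟩

lemma shiftMap_consSeq (a : Bool) (x : Ω) : shiftMap (consSeq a x) = x := rfl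

lemma consSeq_zero (a : Bool) (x : Ω) : consSeq a x 0 = a := rfl

lemma mem_cylinder_cons_consSeq (a b : Bool) (w : List Bool) (x : Ω) :
    consSeq a x ∈ cylinder (b :: w) ↔ a = b ∧ x ∈ cylinder w := by
  rw [mem_cylinder_cons, shiftMap_consSeq, consSeq_zero]

lemma mem_cylinder_append (v u : List Bool) (x : Ω) :
    x ∈ cylinder (v ++ u) ↔
      x ∈ cylinder v ∧ ∀ i : Fin u.length, x (v.length + i) = u.get i := by
  induction v generalizing x with
  | nil => simp [cylinder_nil, _root_.cylinder]
  | cons a v ih =>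
    rw [List.cons_append, mem_cylinder_cons, mem_cylinder_cons, ih, and_assoc]
    constructor
    · rintro ⟨h0, h1, h2⟩
      refine ⟨h0, h1, fun i => ?_⟩
      have := h2 i
      simpa [shiftMap, Nat.add_right_comm] using this
    · rintro ⟨h0, h1, h2⟩
      refine ⟨h0, h1, fun i => ?_⟩
      have := h2 i
      simpa [shiftMap, Nat.add_right_comm] using this

lemma cylinder_disjoint {w v : List Bool} (hl : w.length = v.length) (hne : w ≠ v) :
    cylinder w ∩ cylinder v = ∅ := by
  ext x
  simp only [Set.mem_inter_iff, Set.mem_empty_iff_false, iff_false, not_and]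
  intro hw hv
  apply hne
  apply List.ext_get hl
  intro i h1 h2
  rw [← hw ⟨i, h1⟩, ← hv ⟨i, h2⟩]

lemma measurableSet_cylinder (w : List Bool) : MeasurableSet (cylinder w) := by
  have : cylinder w = ⋂ i : Fin w.length, (fun x : Ω => x (i : ℕ)) ⁻¹' {w.get i} := by
    ext x; simp [_root_.cylinder, Set.mem_iInter]
  rw [this]
  exact MeasurableSet.iInter fun i => measurable_pi_apply (i : ℕ) (measurableSet_singleton _)

lemma measurable_shiftMap : Measurable shiftMap :=
  measurable_pi_lambda _ fun n => measurable_pi_apply (n + 1)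

lemma measurable_consSeq (a : Bool) : Measurable (consSeq a) := by
  apply measurable_pi_lambda
  intro n
  cases n with
  | zero => exact measurable_const
  | succ k => exact measurable_pi_apply k

end Cyl
section Meas

def cylSets : Set (Set Ω) := Set.range _root_.cylinder

lemma inter_of_le {w v : List Bool} (hl : w.length ≤ v.length)
    (hne : (_root_.cylinder w ∩ _root_.cylinder v).Nonempty) :
    _root_.cylinder w ∩ _root_.cylinder v = _root_.cylinder v := by
  obtain ⟨x, hxw, hxv⟩ := hne
  refine subset_antisymm Set.inter_subset_right fun y hy => ⟨fun i => ?_, hy⟩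
  have h1 : y (i : ℕ) = v.get ⟨i, lt_of_lt_of_le i.isLt hl⟩ := hy ⟨i, lt_of_lt_of_le i.isLt hl⟩
  have h2 : x (i : ℕ) = v.get ⟨i, lt_of_lt_of_le i.isLt hl⟩ := hxv ⟨i, lt_of_lt_of_le i.isLt hl⟩
  rw [h1, ← h2, hxw i]

lemma isPiSystem_cylSets : IsPiSystem cylSets := by
  rintro _ ⟨w, rfl⟩ _ ⟨v, rfl⟩ hne
  rcases le_total w.length v.length with h | h
  · rw [inter_of_le h hne]; exact ⟨v, rfl⟩
  · rw [Set.inter_comm] at hne ⊢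
    rw [inter_of_le h hne]; exact ⟨w, rfl⟩

lemma coord_mem_generateFrom (i : ℕ) (b : Bool) :
    MeasurableSet[MeasurableSpace.generateFrom cylSets] {x : Ω | x i = b} := by
  have : {x : Ω | x i = b} = ⋃ u : Fin i → Bool, _root_.cylinder (List.ofFn u ++ [b]) := by
    ext x
    simp only [Set.mem_setOf_eq, Set.mem_iUnion]
    constructor
    · intro hx
      refine ⟨fun j => x j, ?_⟩
      rw [mem_cylinder_append]
      constructor
      · intro j
        rw [List.get_ofFn]
        rfl
      · intro j
        have hj : (j : ℕ) = 0 := Nat.lt_one_iff.mp j.isLt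
        simp [List.length_ofFn, hj, hx]
    · rintro ⟨u, hu⟩
      rw [mem_cylinder_append] at hu
      have := hu.2 ⟨0, by simp⟩
      simpa [List.length_ofFn] using this
  rw [this]
  exact MeasurableSet.iUnion fun u => MeasurableSpace.measurableSet_generateFrom ⟨_, rfl⟩

lemma generateFrom_cylSets :
    (inferInstance : MeasurableSpace Ω) = MeasurableSpace.generateFrom cylSets := by
  apply le_antisymm
  · show MeasurableSpace.pi ≤ _
    refine iSup_le fun i => ?_
    rintro s ⟨t, -, rfl⟩
    have : (fun x : Ω => x i) ⁻¹' t = ⋃ b ∈ t, {x : Ω | x i = b} := by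
      ext x; simp [eq_comm]
    rw [this]
    exact MeasurableSet.biUnion t.to_countable fun b _ => coord_mem_generateFrom i b
  · apply MeasurableSpace.generateFrom_le
    rintro _ ⟨w, rfl⟩
    exact measurableSet_cylinder w

lemma shift_measurePreserving (μ : Measure Ω) [IsProbabilityMeasure μ]
    (hμ : ∀ w : List Bool, μ (_root_.cylinder w) = (1 / 2) ^ w.length) :
    MeasurePreserving shiftMap μ μ := by
  refine ⟨measurable_shiftMap, ?_⟩
  have hpm : IsProbabilityMeasure (μ.map shiftMap) :=
    Measure.isProbabilityMeasure_map measurable_shiftMap.aemeasurable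
  refine ext_of_generate_finite cylSets generateFrom_cylSets isPiSystem_cylSets ?_ (by simp)
  rintro _ ⟨w, rfl⟩
  rw [Measure.map_apply measurable_shiftMap (measurableSet_cylinder w)]
  have hpre : shiftMap ⁻¹' _root_.cylinder w =
      _root_.cylinder (false :: w) ∪ _root_.cylinder (true :: w) := by
    ext x
    simp only [Set.mem_preimage, Set.mem_union, mem_cylinder_cons]
    cases h : x 0 <;> simp [h]
  have hdis : Disjoint (_root_.cylinder (false :: w)) (_root_.cylinder (true :: w)) :=
    Set.disjoint_iff_inter_eq_empty.mpr (cylinder_disjoint (by simp) (by simp))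
  rw [hpre, measure_union hdis (measurableSet_cylinder _), hμ, hμ, hμ]
  simp only [List.length_cons, pow_succ]
  rw [← mul_add, ENNReal.add_halves, mul_one]

lemma cons_map (μ : Measure Ω) [IsProbabilityMeasure μ]
    (hμ : ∀ w : List Bool, μ (_root_.cylinder w) = (1 / 2) ^ w.length) (a : Bool) :
    μ.map (consSeq a) = (2 : ℝ≥0∞) • μ.restrict (_root_.cylinder [a]) := by
  have hcyl : ∀ w : List Bool, (μ.map (consSeq a)) (_root_.cylinder w) =
      ((2 : ℝ≥0∞) • μ.restrict (_root_.cylinder [a])) (_root_.cylinder w) := by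
    intro w
    rw [Measure.map_apply (measurable_consSeq a) (measurableSet_cylinder w),
      Measure.smul_apply, Measure.restrict_apply (measurableSet_cylinder w)]
    match w with
    | [] =>
      rw [cylinder_nil, Set.univ_inter, Set.preimage_univ, hμ, measure_univ]
      simp only [List.length_cons, List.length_nil, zero_add, pow_one, smul_eq_mul, one_div]
      exact (ENNReal.mul_inv_cancel two_ne_zero (by norm_num)).symm
    | b :: w' =>
      by_cases hab : a = b
      · subst hab
        have h1 : consSeq a ⁻¹' _root_.cylinder (a :: w') = _root_.cylinder w' := by
          ext x; simp [mem_cylinder_cons_consSeq]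
        have h2 : _root_.cylinder (a :: w') ∩ _root_.cylinder [a] = _root_.cylinder (a :: w') := by
          refine Set.inter_eq_left.mpr fun x hx => ?_
          intro i
          have hi : (i : ℕ) = 0 := Nat.lt_one_iff.mp i.isLt
          rw [show [a].get i = a by simp, hi]
          exact hx ⟨0, Nat.succ_pos _⟩
        rw [h1, h2, hμ, hμ]
        simp only [List.length_cons, pow_succ, smul_eq_mul]
        rw [mul_comm ((1/2 : ℝ≥0∞) ^ w'.length) (1/2), ← mul_assoc,
          ENNReal.mul_div_cancel' (by norm_num) (by norm_num), one_mul]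
      · have h1 : consSeq a ⁻¹' _root_.cylinder (b :: w') = ∅ := by
          ext x; simp [mem_cylinder_cons_consSeq, hab]
        have h2 : _root_.cylinder (b :: w') ∩ _root_.cylinder [a] = ∅ := by
          ext x
          simp only [Set.mem_inter_iff, Set.mem_empty_iff_false, iff_false, not_and]
          intro hb ha
          have h3 := hb ⟨0, Nat.succ_pos _⟩
          have h4 := ha ⟨0, Nat.succ_pos _⟩
          exact hab (h4.symm.trans h3 : a = b)
        rw [h1, h2]
        simp
  have hpm : IsProbabilityMeasure (μ.map (consSeq a)) :=
    Measure.isProbabilityMeasure_map (measurable_consSeq a).aemeasurable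
  refine ext_of_generate_finite cylSets generateFrom_cylSets isPiSystem_cylSets ?_ ?_
  · rintro _ ⟨w, rfl⟩; exact hcyl w
  · have := hcyl []
    rwa [cylinder_nil] at this

lemma cons_qmp (μ : Measure Ω) [IsProbabilityMeasure μ]
    (hμ : ∀ w : List Bool, μ (_root_.cylinder w) = (1 / 2) ^ w.length) (a : Bool) :
    Measure.QuasiMeasurePreserving (consSeq a) μ μ := by
  refine ⟨measurable_consSeq a, ?_⟩
  rw [cons_map μ hμ a]
  intro s hs
  rw [Measure.smul_apply, smul_eq_mul]
  have : μ.restrict (_root_.cylinder [a]) s = 0 :=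
    le_antisymm ((Measure.restrict_le_self s).trans hs.le) (zero_le)
  rw [this, mul_zero]

end Meas
section Haar

open Classical in
lemma indicator_one_apply (s : Set Ω) (x : Ω) :
    s.indicator (1 : Ω → ℝ) x = if x ∈ s then 1 else 0 := by
  by_cases h : x ∈ s <;> simp [h]

lemma indicator_shift (v : List Bool) (x : Ω) :
    (_root_.cylinder v).indicator (1 : Ω → ℝ) (shiftMap x) =
      (_root_.cylinder (false :: v)).indicator 1 x +
        (_root_.cylinder (true :: v)).indicator 1 x := by
  classical
  rw [indicator_one_apply, indicator_one_apply, indicator_one_apply]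
  simp only [mem_cylinder_cons]
  cases h : x 0 <;> by_cases hs : shiftMap x ∈ _root_.cylinder v <;> simp [h, hs]

lemma two_rpow_add (s t : ℝ) : (2:ℝ) ^ (s + t) = (2:ℝ) ^ s * (2:ℝ) ^ t :=
  Real.rpow_add two_pos s t

lemma haar_shift (w : List Bool) (x : Ω) :
    haarFun w (shiftMap x) =
      (2:ℝ) ^ (-(1:ℝ)/2) * (haarFun (false :: w) x + haarFun (true :: w) x) := by
  unfold haarFun
  simp only [List.cons_append, List.length_cons, Nat.cast_add, Nat.cast_one]
  rw [indicator_shift, indicator_shift]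
  have hr : (2:ℝ) ^ ((w.length:ℝ)/2) =
      (2:ℝ) ^ (-(1:ℝ)/2) * (2:ℝ) ^ (((w.length:ℝ)+1)/2) := by
    rw [← two_rpow_add]; congr 1; ring
  rw [hr]; ring

lemma indicator_consSeq (a b : Bool) (v : List Bool) (x : Ω) :
    (_root_.cylinder (b :: v)).indicator (1:Ω→ℝ) (consSeq a x) =
      if a = b then (_root_.cylinder v).indicator 1 x else 0 := by
  classical
  rw [indicator_one_apply]
  by_cases hab : a = b <;> by_cases hs : x ∈ _root_.cylinder v <;>
    simp [mem_cylinder_cons_consSeq, hab, hs]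

lemma haar_cons (b : Bool) (w : List Bool) (x : Ω) :
    (haarFun (b :: w) (consSeq false x) + haarFun (b :: w) (consSeq true x)) / 2
      = (2:ℝ) ^ (-(1:ℝ)/2) * haarFun w x := by
  unfold haarFun
  simp only [List.cons_append, List.length_cons, Nat.cast_add, Nat.cast_one,
    indicator_consSeq]
  have h2 : (2:ℝ) ^ (((w.length:ℝ)+1)/2) =
      2 * ((2:ℝ)^(-(1:ℝ)/2) * (2:ℝ)^((w.length:ℝ)/2)) := by
    have h3 : (2:ℝ) * ((2:ℝ)^(-(1:ℝ)/2) * (2:ℝ)^((w.length:ℝ)/2)) =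
        (2:ℝ)^((1:ℝ) + (-(1:ℝ)/2 + (w.length:ℝ)/2)) := by
      rw [two_rpow_add, two_rpow_add, Real.rpow_one]
    rw [h3]; congr 1; ring
  cases b
  · rw [if_pos rfl, if_pos rfl, if_neg (by decide), if_neg (by decide), h2]; ring
  · rw [if_neg (by decide), if_neg (by decide), if_pos rfl, if_pos rfl, h2]; ring

lemma haar_ne (a : Bool) (w : List Bool) (x : Ω) (h : x 0 ≠ a) : haarFun (a :: w) x = 0 := by
  unfold haarFun
  have h1 : x ∉ _root_.cylinder ((a :: w) ++ [true]) := by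
    rw [List.cons_append, mem_cylinder_cons]; tauto
  have h0 : x ∉ _root_.cylinder ((a :: w) ++ [false]) := by
    rw [List.cons_append, mem_cylinder_cons]; tauto
  rw [Set.indicator_of_notMem h1, Set.indicator_of_notMem h0]
  ring

lemma cylinder_append_disjoint (v : List Bool) :
    _root_.cylinder (v ++ [true]) ∩ _root_.cylinder (v ++ [false]) = ∅ :=
  cylinder_disjoint (by simp) (by simp)

lemma haar_sq (v : List Bool) (x : Ω) :
    haarFun v x * haarFun v x =
      (2:ℝ) ^ (v.length : ℕ) *
        ((_root_.cylinder (v ++ [true])).indicator 1 x +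
         (_root_.cylinder (v ++ [false])).indicator 1 x) := by
  have h2 : (2:ℝ)^((v.length:ℝ)/2) * (2:ℝ)^((v.length:ℝ)/2) = (2:ℝ)^(v.length : ℕ) := by
    rw [← two_rpow_add, ← Real.rpow_natCast 2 v.length]; congr 1; ring
  unfold haarFun
  by_cases h1 : x ∈ _root_.cylinder (v ++ [true]) <;>
    by_cases h0 : x ∈ _root_.cylinder (v ++ [false])
  · exact absurd (Set.mem_inter h1 h0)
      (by rw [cylinder_append_disjoint v]; exact Set.notMem_empty x)
  · simp only [Set.indicator_of_mem h1, Set.indicator_of_notMem h0, Pi.one_apply]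
    rw [← h2]; ring
  · simp only [Set.indicator_of_notMem h1, Set.indicator_of_mem h0, Pi.one_apply]
    rw [← h2]; ring
  · simp only [Set.indicator_of_notMem h1, Set.indicator_of_notMem h0]
    rw [← h2]; ring

lemma integral_indicator_cyl (μ : Measure Ω) [IsProbabilityMeasure μ]
    (hμ : ∀ w : List Bool, μ (_root_.cylinder w) = (1 / 2) ^ w.length) (w : List Bool) :
    ∫ x, (_root_.cylinder w).indicator (1:Ω→ℝ) x ∂μ = (1/2:ℝ) ^ w.length := by
  rw [integral_indicator_one (measurableSet_cylinder w), measureReal_def, hμ]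
  simp [ENNReal.toReal_pow]

lemma integrable_indicator_cyl (μ : Measure Ω) [IsProbabilityMeasure μ] (w : List Bool) :
    Integrable ((_root_.cylinder w).indicator (1:Ω→ℝ)) μ := by
  apply (integrable_indicator_iff (measurableSet_cylinder w)).2
  exact integrableOn_const (measure_ne_top μ _)

end Haar
section SumLp

lemma ofFn_cons {n : ℕ} (a : Bool) (u : Fin n → Bool) :
    List.ofFn (Fin.cons a u : Fin (n+1) → Bool) = a :: List.ofFn u := by
  rw [List.ofFn_succ]
  simp

lemma sum_succ {M : Type*} [AddCommMonoid M] (F : List Bool → M) (n : ℕ) (l : List Bool) :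
    ∑ u : Fin (n+1) → Bool, F (List.ofFn u ++ l)
      = ∑ u : Fin n → Bool,
          (F (false :: (List.ofFn u ++ l)) + F (true :: (List.ofFn u ++ l))) := by
  rw [← Equiv.sum_comp (Fin.consEquiv (fun _ : Fin (n+1) => Bool))
    (fun u => F (List.ofFn u ++ l)), Fintype.sum_prod_type, Fintype.sum_bool,
    Finset.sum_add_distrib, add_comm]
  congr 1
  · apply Finset.sum_congr rfl
    intro u _
    rw [show (List.ofFn ((Fin.consEquiv fun _ : Fin (n+1) => Bool) (false, u)))
      = false :: List.ofFn u from ofFn_cons false u, List.cons_append]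
  · apply Finset.sum_congr rfl
    intro u _
    rw [show (List.ofFn ((Fin.consEquiv fun _ : Fin (n+1) => Bool) (true, u)))
      = true :: List.ofFn u from ofFn_cons true u, List.cons_append]

variable {μ : Measure Ω} [IsProbabilityMeasure μ]

lemma K_e (hμ : ∀ w : List Bool, μ (_root_.cylinder w) = (1 / 2) ^ w.length)
    (K : E μ →L[ℝ] E μ)
    (hK : ∀ g : E μ, (K g : Ω → ℝ) =ᵐ[μ] fun x => g (shiftMap x))
    (e : List Bool → E μ) (he : ∀ w : List Bool, (e w : Ω → ℝ) =ᵐ[μ] haarFun w)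
    (w : List Bool) :
    K (e w) = (2:ℝ) ^ (-(1:ℝ)/2) • (e (false :: w) + e (true :: w)) := by
  apply Lp.ext
  have h2 : ((e w : Ω → ℝ) ∘ shiftMap) =ᵐ[μ] (haarFun w ∘ shiftMap) :=
    (shift_measurePreserving μ hμ).quasiMeasurePreserving.ae_eq_comp (he w)
  have h3 : (((2:ℝ) ^ (-(1:ℝ)/2) • (e (false :: w) + e (true :: w)) : E μ) : Ω → ℝ)
      =ᵐ[μ] fun x => (2:ℝ) ^ (-(1:ℝ)/2) * (haarFun (false :: w) x + haarFun (true :: w) x) := by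
    filter_upwards [Lp.coeFn_smul ((2:ℝ) ^ (-(1:ℝ)/2)) (e (false :: w) + e (true :: w)),
      Lp.coeFn_add (e (false :: w)) (e (true :: w)), he (false :: w), he (true :: w)]
      with x hx1 hx2 hx3 hx4
    rw [hx1, Pi.smul_apply, hx2, Pi.add_apply, hx3, hx4, smul_eq_mul]
  filter_upwards [hK (e w), h2, h3] with x hx1 hx2 hx3
  rw [hx1]
  show (e w : Ω → ℝ) (shiftMap x) = _
  calc (e w : Ω → ℝ) (shiftMap x) = haarFun w (shiftMap x) := hx2
    _ = (2:ℝ) ^ (-(1:ℝ)/2) * (haarFun (false :: w) x + haarFun (true :: w) x) := haar_shift w x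
    _ = _ := hx3.symm

lemma L_e (hμ : ∀ w : List Bool, μ (_root_.cylinder w) = (1 / 2) ^ w.length)
    (L : E μ →L[ℝ] E μ)
    (hL : ∀ g : E μ, (L g : Ω → ℝ) =ᵐ[μ]
      fun x => (g (consSeq false x) + g (consSeq true x)) / 2)
    (e : List Bool → E μ) (he : ∀ w : List Bool, (e w : Ω → ℝ) =ᵐ[μ] haarFun w)
    (b : Bool) (w : List Bool) :
    L (e (b :: w)) = (2:ℝ) ^ (-(1:ℝ)/2) • e w := by
  apply Lp.ext
  have hf : ((e (b :: w) : Ω → ℝ) ∘ consSeq false) =ᵐ[μ] (haarFun (b :: w) ∘ consSeq false) :=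
    (cons_qmp μ hμ false).ae_eq_comp (he (b :: w))
  have ht : ((e (b :: w) : Ω → ℝ) ∘ consSeq true) =ᵐ[μ] (haarFun (b :: w) ∘ consSeq true) :=
    (cons_qmp μ hμ true).ae_eq_comp (he (b :: w))
  have h3 : (((2:ℝ) ^ (-(1:ℝ)/2) • e w : E μ) : Ω → ℝ)
      =ᵐ[μ] fun x => (2:ℝ) ^ (-(1:ℝ)/2) * haarFun w x := by
    filter_upwards [Lp.coeFn_smul ((2:ℝ) ^ (-(1:ℝ)/2)) (e w), he w] with x hx1 hx2
    rw [hx1, Pi.smul_apply, hx2, smul_eq_mul]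
  filter_upwards [hL (e (b :: w)), hf, ht, h3] with x hx1 hx2 hx3 hx4
  rw [hx1, hx4]
  show ((e (b :: w) : Ω → ℝ) (consSeq false x) + (e (b :: w) : Ω → ℝ) (consSeq true x)) / 2 = _
  rw [show (e (b :: w) : Ω → ℝ) (consSeq false x) = haarFun (b :: w) (consSeq false x) from hx2,
    show (e (b :: w) : Ω → ℝ) (consSeq true x) = haarFun (b :: w) (consSeq true x) from hx3]
  exact haar_cons b w x

lemma LK_id (hμ : ∀ w : List Bool, μ (_root_.cylinder w) = (1 / 2) ^ w.length)
    (K L : E μ →L[ℝ] E μ)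
    (hK : ∀ g : E μ, (K g : Ω → ℝ) =ᵐ[μ] fun x => g (shiftMap x))
    (hL : ∀ g : E μ, (L g : Ω → ℝ) =ᵐ[μ]
      fun x => (g (consSeq false x) + g (consSeq true x)) / 2)
    (g : E μ) : L (K g) = g := by
  apply Lp.ext
  have hf : ((K g : Ω → ℝ) ∘ consSeq false) =ᵐ[μ] ((fun x => g (shiftMap x)) ∘ consSeq false) :=
    (cons_qmp μ hμ false).ae_eq_comp (hK g)
  have ht : ((K g : Ω → ℝ) ∘ consSeq true) =ᵐ[μ] ((fun x => g (shiftMap x)) ∘ consSeq true) :=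
    (cons_qmp μ hμ true).ae_eq_comp (hK g)
  filter_upwards [hL (K g), hf, ht] with x hx1 hx2 hx3
  rw [hx1]
  show ((K g : Ω → ℝ) (consSeq false x) + (K g : Ω → ℝ) (consSeq true x)) / 2 = _
  have e2 : (K g : Ω → ℝ) (consSeq false x) = (g : Ω → ℝ) x := hx2
  have e3 : (K g : Ω → ℝ) (consSeq true x) = (g : Ω → ℝ) x := hx3
  rw [e2, e3]
  ring

lemma inner_e_self (hμ : ∀ w : List Bool, μ (_root_.cylinder w) = (1 / 2) ^ w.length)
    (e : List Bool → E μ) (he : ∀ w : List Bool, (e w : Ω → ℝ) =ᵐ[μ] haarFun w)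
    (v : List Bool) : ⟪e v, e v⟫_ℝ = 1 := by
  rw [L2.inner_def]
  simp only [RCLike.inner_apply, starRingEnd_apply, star_trivial]
  have h1 : ∫ x, (e v : Ω → ℝ) x * (e v : Ω → ℝ) x ∂μ
      = ∫ x, haarFun v x * haarFun v x ∂μ :=
    integral_congr_ae (by filter_upwards [he v] with x hx; rw [hx])
  rw [h1, integral_congr_ae (Filter.Eventually.of_forall fun x => haar_sq v x),
    integral_const_mul, integral_add (integrable_indicator_cyl μ _) (integrable_indicator_cyl μ _),
    integral_indicator_cyl μ hμ, integral_indicator_cyl μ hμ]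
  simp only [List.length_append, List.length_cons, List.length_nil]
  have h2 : ((2:ℝ))^(v.length+1) ≠ 0 := by positivity
  rw [one_div, inv_pow]
  field_simp
  ring

lemma inner_e_mixed (e : List Bool → E μ)
    (he : ∀ w : List Bool, (e w : Ω → ℝ) =ᵐ[μ] haarFun w)
    (w : List Bool) : ⟪e (false :: w), e (true :: w)⟫_ℝ = 0 := by
  rw [L2.inner_def]
  simp only [RCLike.inner_apply, starRingEnd_apply, star_trivial]
  have h1 : ∫ x, (e (false :: w) : Ω → ℝ) x * (e (true :: w) : Ω → ℝ) x ∂μ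
      = ∫ x, (0:ℝ) ∂μ := by
    apply integral_congr_ae
    filter_upwards [he (false :: w), he (true :: w)] with x hx1 hx2
    rw [hx1, hx2]
    by_cases h : x 0 = false
    · rw [haar_ne true w x (by simp [h]), mul_zero]
    · rw [haar_ne false w x h, zero_mul]
  simp_rw [mul_comm ((e (true :: w) : Ω → ℝ) _)]
  rw [h1, integral_zero]

end SumLp
section Final

lemma ket_zero {μ : Measure Ω} (e : List Bool → E μ) (w : List Bool) :
    ket e 0 w = (2:ℝ) ^ (-(1:ℝ)/2) • (e (false :: w) - e (true :: w)) := by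
  simp only [ket, Nat.cast_zero, zero_add]
  congr 1
  rw [show (∑ u : Fin 0 → Bool, e (List.ofFn u ++ (false :: w))) = e (false :: w) from by
        simp, show (∑ u : Fin 0 → Bool, e (List.ofFn u ++ (true :: w))) = e (true :: w) from by
        simp]

theorem stmt19'
    (μ : Measure Ω) [IsProbabilityMeasure μ]
    (hμ : ∀ w : List Bool, μ (_root_.cylinder w) = (1 / 2) ^ w.length)
    (K L : E μ →L[ℝ] E μ)
    (hK : ∀ g : E μ, (K g : Ω → ℝ) =ᵐ[μ] fun x => g (shiftMap x))
    (hL : ∀ g : E μ, (L g : Ω → ℝ) =ᵐ[μ]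
      fun x => (g (consSeq false x) + g (consSeq true x)) / 2)
    (hadj : ContinuousLinearMap.adjoint K = L)
    (e : List Bool → E μ) (he : ∀ w : List Bool, (e w : Ω → ℝ) =ᵐ[μ] haarFun w) :
    (∀ (n : ℕ) (w : List Bool), ‖ket e n w‖ = 1) ∧
    (∀ (n : ℕ) (w : List Bool), K (ket e n w) = ket e (n + 1) w) ∧
    (∀ (n : ℕ) (w : List Bool), 1 ≤ n → L (ket e n w) = ket e (n - 1) w) ∧
    (∀ w : List Bool, L (ket e 0 w) = 0) ∧
    (∀ (n : ℕ) (w : List Bool), 1 ≤ n →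
      (K ^ n) (ket e 0 w) = ket e n w ∧ K (L (ket e n w)) = ket e n w) := by
  have hKe := K_e hμ K hK e he
  have hLe := L_e hμ L hL e he
  have hLK : ∀ g : E μ, L (K g) = g := LK_id hμ K L hK hL
  have hKnorm : ∀ g : E μ, ‖K g‖ = ‖g‖ := by
    intro g
    have h1 : ⟪K g, K g⟫_ℝ = ⟪g, g⟫_ℝ := by
      rw [← ContinuousLinearMap.adjoint_inner_left K g (K g), hadj, hLK]
    rw [norm_eq_sqrt_real_inner (K g), norm_eq_sqrt_real_inner g, h1]
  -- (ii)
  have hKket : ∀ (n : ℕ) (w : List Bool), K (ket e n w) = ket e (n + 1) w := by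
    intro n w
    simp only [ket]
    rw [_root_.map_smul, map_sub, map_sum, map_sum]
    have hs : ∀ l : List Bool, (∑ u : Fin n → Bool, K (e (List.ofFn u ++ l)))
        = (2:ℝ) ^ (-(1:ℝ)/2) • ∑ u' : Fin (n+1) → Bool, e (List.ofFn u' ++ l) := by
      intro l
      calc (∑ u : Fin n → Bool, K (e (List.ofFn u ++ l)))
          = ∑ u : Fin n → Bool, (2:ℝ) ^ (-(1:ℝ)/2) •
              (e (false :: (List.ofFn u ++ l)) + e (true :: (List.ofFn u ++ l))) := by
            exact Finset.sum_congr rfl fun u _ => hKe (List.ofFn u ++ l)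
        _ = (2:ℝ) ^ (-(1:ℝ)/2) • ∑ u : Fin n → Bool,
              (e (false :: (List.ofFn u ++ l)) + e (true :: (List.ofFn u ++ l))) := by
            rw [Finset.smul_sum]
        _ = (2:ℝ) ^ (-(1:ℝ)/2) • ∑ u' : Fin (n+1) → Bool, e (List.ofFn u' ++ l) := by
            rw [sum_succ (fun l' => e l') n l]
    rw [hs, hs, ← smul_sub, smul_smul]
    congr 1
    rw [← two_rpow_add]
    congr 1
    push_cast
    ring
  -- (iii) in succ form
  have hLket : ∀ (n : ℕ) (w : List Bool), L (ket e (n+1) w) = ket e n w := by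
    intro n w
    simp only [ket]
    rw [_root_.map_smul, map_sub, map_sum, map_sum]
    have hs : ∀ l : List Bool, (∑ u : Fin (n+1) → Bool, L (e (List.ofFn u ++ l)))
        = ((2:ℝ) ^ (-(1:ℝ)/2) * 2) • ∑ u : Fin n → Bool, e (List.ofFn u ++ l) := by
      intro l
      rw [sum_succ (fun l' => L (e l')) n l]
      calc (∑ u : Fin n → Bool,
            (L (e (false :: (List.ofFn u ++ l))) + L (e (true :: (List.ofFn u ++ l)))))
          = ∑ u : Fin n → Bool, ((2:ℝ) ^ (-(1:ℝ)/2) * 2) • e (List.ofFn u ++ l) := by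
            refine Finset.sum_congr rfl fun u _ => ?_
            rw [hLe false (List.ofFn u ++ l), hLe true (List.ofFn u ++ l),
              mul_comm, mul_smul, two_smul]
        _ = ((2:ℝ) ^ (-(1:ℝ)/2) * 2) • ∑ u : Fin n → Bool, e (List.ofFn u ++ l) := by
            rw [Finset.smul_sum]
    rw [hs, hs, ← smul_sub, smul_smul]
    congr 1
    rw [← Real.rpow_add_one (by norm_num : (2:ℝ) ≠ 0), ← two_rpow_add]
    congr 1
    push_cast
    ring
  -- (iv)
  have hLket0 : ∀ w : List Bool, L (ket e 0 w) = 0 := by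
    intro w
    rw [ket_zero, _root_.map_smul, map_sub, hLe false w, hLe true w, sub_self, smul_zero]
  -- (i)
  have hnorm : ∀ (n : ℕ) (w : List Bool), ‖ket e n w‖ = 1 := by
    intro n w
    induction n with
    | zero =>
      rw [ket_zero]
      have h00 := inner_e_self hμ e he (false :: w)
      have h11 := inner_e_self hμ e he (true :: w)
      have h01 := inner_e_mixed e he w
      have h10 : ⟪e (true :: w), e (false :: w)⟫_ℝ = 0 := by
        rw [real_inner_comm]; exact h01
      have hv : ‖e (false :: w) - e (true :: w)‖ = Real.sqrt 2 := by
        rw [norm_eq_sqrt_real_inner, inner_sub_left, inner_sub_right, inner_sub_right,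
          h00, h11, h01, h10]
        norm_num
      rw [norm_smul, hv, Real.norm_eq_abs, abs_of_pos (Real.rpow_pos_of_pos two_pos _),
        Real.sqrt_eq_rpow, ← two_rpow_add]
      norm_num
    | succ m ih =>
      rw [← hKket m w, hKnorm]
      exact ih
  refine ⟨hnorm, hKket, ?_, hLket0, ?_⟩
  · intro n w hn
    match n, hn with
    | (m+1), _ => simpa using hLket m w
  · intro n w hn
    have hpow : ∀ k : ℕ, (K ^ k) (ket e 0 w) = ket e k w := by
      intro k
      induction k with
      | zero => simp
      | succ m ih => rw [pow_succ', ContinuousLinearMap.mul_apply, ih, hKket]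
    refine ⟨hpow n, ?_⟩
    match n, hn with
    | (m+1), _ => rw [hLket m w, hKket m w]

end Final

/-- Properties of the vectors `|n,w⟩`: they are unit vectors, `K|n,w⟩ = |n+1,w⟩`,
`L|n,w⟩ = |n−1,w⟩` for `n ≥ 1`, `L|0,w⟩ = 0`, and consequently `Kⁿ|0,w⟩ = |n,w⟩`
and `KL|n,w⟩ = |n,w⟩` for `n ≥ 1`. -/
theorem stmt19
    (μ : Measure Ω) [IsProbabilityMeasure μ]
    (hμ : ∀ w : List Bool, μ (cylinder w) = (1 / 2) ^ w.length)
    (K L : E μ →L[ℝ] E μ)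
    (hK : ∀ g : E μ, (K g : Ω → ℝ) =ᵐ[μ] fun x => g (shiftMap x))
    (hL : ∀ g : E μ, (L g : Ω → ℝ) =ᵐ[μ]
      fun x => (g (consSeq false x) + g (consSeq true x)) / 2)
    (hadj : ContinuousLinearMap.adjoint K = L)
    (e : List Bool → E μ) (he : ∀ w : List Bool, (e w : Ω → ℝ) =ᵐ[μ] haarFun w) :
    (∀ (n : ℕ) (w : List Bool), ‖ket e n w‖ = 1) ∧
    (∀ (n : ℕ) (w : List Bool), K (ket e n w) = ket e (n + 1) w) ∧
    (∀ (n : ℕ) (w : List Bool), 1 ≤ n → L (ket e n w) = ket e (n - 1) w) ∧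
    (∀ w : List Bool, L (ket e 0 w) = 0) ∧
    (∀ (n : ℕ) (w : List Bool), 1 ≤ n →
      (K ^ n) (ket e 0 w) = ket e n w ∧ K (L (ket e n w)) = ket e n w) := by
  exact stmt19' μ hμ K L hK hL hadj e he
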